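/- PMF-gradient counterexample: Let the support be z = (0, 1, 2), let P = (1/3, 1/3, 1/3) and P' = (1/2, 0, 1/2) be PMFs (with CDFs F = (1/3, 2/3, 1) and F' = (1/2, 1/2, 1)), both having expectation 1. Then the gradient of the squared Cramér distance ℓ_2²(P, P') with respect to the PMF coordinates of P is (0, -1/3, 0) (up to a common shift constant along the all-ones direction), and for every step size α > 0 the updated vector P - α ∇_P ℓ_2²(P, P') has 'expectation' Σ z_i (P - α∇)_i = 1 - α/3 ≠ 1; i.e., the PMF-gradient update does not preserve expectation. -/

import Mathlib

open Finset

/-- PMF-gradient counterexample on support `z = (0,1,2)`: with `P = (1/3,1/3,1/3)` and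
`P' = (1/2,0,1/2)` (both of expectation 1), the PMF gradient of the squared Cramér
distance is `(0, 1/3, 0)`, and for every step size `α > 0` the updated vector
`P - α ∇` has expectation `1 - α/3 ≠ 1`. -/
theorem pmf_gradient_counterexample :
    let z : Fin 3 → ℝ := ![0, 1, 2]
    let P : Fin 3 → ℝ := ![1/3, 1/3, 1/3]
    let P' : Fin 3 → ℝ := ![1/2, 0, 1/2]
    let Fc : (Fin 3 → ℝ) → Fin 2 → ℝ := fun p j =>
      ∑ k ∈ Finset.univ.filter (fun k : Fin 3 => (k : ℕ) ≤ (j : ℕ)), p k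
    let g : Fin 3 → ℝ := fun i =>
      2 * ∑ j ∈ Finset.univ.filter (fun j : Fin 2 => (i : ℕ) ≤ (j : ℕ)),
        (Fc P j - Fc P' j)
    (Fc P = ![1/3, 2/3]) ∧ (Fc P' = ![1/2, 1/2]) ∧
    (∑ i, z i * P i = 1) ∧ (∑ i, z i * P' i = 1) ∧
    (g = ![0, 1/3, 0]) ∧
    (∀ αs : ℝ, 0 < αs →
      (∑ i, z i * (P i - αs * g i)) = 1 - αs / 3 ∧ 1 - αs / 3 ≠ 1) := by
  intro z P P' Fc g
  refine ⟨?_, ?_, ?_, ?_, ?_, ?_⟩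
  · funext j; fin_cases j <;> simp [Fc, Finset.sum_filter, Fin.sum_univ_three, P] <;> norm_num
  · funext j; fin_cases j <;> simp [Fc, Finset.sum_filter, Fin.sum_univ_three, P'] <;> norm_num
  · simp [Fin.sum_univ_three, z, P]; norm_num
  · simp [Fin.sum_univ_three, z, P']
  · funext i; fin_cases i <;>
      simp [g, Fc, Finset.sum_filter, Fin.sum_univ_two, Fin.sum_univ_three, P, P'] <;> norm_num
  · intro a ha
    constructor
    · simp [Fin.sum_univ_three, z, P, P', g, Fc, Finset.sum_filter, Fin.sum_univ_two]
      ring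
    · intro h; nlinarith
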